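/- There exists a function assigning to every linear order R on ℕ an order automorphism φ_R of ℚ such that for all linear orders R and S on ℕ: (ℕ, R) is order-isomorphic to (ℕ, S) if and only if φ_R and φ_S are conjugate in Aut(ℚ). Moreover the assignment can be chosen so that the fixed-point set of φ_R, with the order induced from ℚ, is order-isomorphic to (ℕ, R). -/

import Mathlib

structure NQ : Type where
  a : ℕ
  q : ℚ

instance : Countable NQ :=
  Countable.of_equiv (ℕ × ℚ) ⟨fun x => ⟨x.1, x.2⟩, fun p => ⟨p.a, p.q⟩, fun _ => rfl, fun _ => rfl⟩

instance : Nonempty NQ := ⟨⟨0, 0⟩⟩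

/-- the basic automorphism of ℚ fixing exactly 0 -/
noncomputable def psiFun (q : ℚ) : ℚ := if q ≤ 0 then q / 2 else 2 * q

noncomputable def psiInv (q : ℚ) : ℚ := if q ≤ 0 then 2 * q else q / 2

lemma psi_strictMono : StrictMono psiFun := by
  intro a b hab
  unfold psiFun
  split_ifs with h1 h2 h2 <;> (try push_neg at *) <;> linarith

lemma psi_left : Function.LeftInverse psiInv psiFun := by
  intro q
  unfold psiFun psiInv
  split_ifs with h1 h2 h2 <;> (try push_neg at *) <;> first | linarith | ring

lemma psi_right : Function.RightInverse psiInv psiFun := by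
  intro q
  unfold psiFun psiInv
  split_ifs with h1 h2 h2 <;> (try push_neg at *) <;> first | linarith | ring

noncomputable def psi : ℚ ≃o ℚ :=
  ⟨⟨psiFun, psiInv, psi_left, psi_right⟩, by
    intro a b
    exact psi_strictMono.le_iff_le⟩

lemma psi_fixed (q : ℚ) : psi q = q ↔ q = 0 := by
  show psiFun q = q ↔ q = 0
  unfold psiFun
  split_ifs with h <;> constructor <;> intro hq <;> (try push_neg at *) <;> first | linarith | (subst hq; norm_num)

/-- transfer linearity along a relation isomorphism -/
lemma relIso_isLinearOrder {α β : Type*} {r : α → α → Prop} {s : β → β → Prop}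
    (j : r ≃r s) (h : IsLinearOrder β s) : IsLinearOrder α r := by
  haveI := h
  exact
    { refl := fun a => j.map_rel_iff.mp (Std.Refl.refl (j a))
      trans := fun a b c hab hbc =>
        j.map_rel_iff.mp (IsTrans.trans _ _ _ (j.map_rel_iff.mpr hab) (j.map_rel_iff.mpr hbc))
      antisymm := fun a b hab hba =>
        j.injective (Std.Antisymm.antisymm _ _ (j.map_rel_iff.mpr hab) (j.map_rel_iff.mpr hba))
      total := fun a b => by
        rcases Std.Total.total (r := s) (j a) (j b) with h' | h'
        · exact Or.inl (j.map_rel_iff.mp h')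
        · exact Or.inr (j.map_rel_iff.mp h') }

@[simp] lemma NQ.a_mk (a : ℕ) (q : ℚ) : (NQ.mk a q).a = a := rfl
@[simp] lemma NQ.q_mk (a : ℕ) (q : ℚ) : (NQ.mk a q).q = q := rfl

lemma NQ.ext0 (p : NQ) (h : p.q = 0) : (NQ.mk p.a 0) = p := by
  cases p; simp_all

lemma NQ.ne_mk (p : NQ) (t : ℚ) (h : p.q ≠ t) : p ≠ NQ.mk p.a t :=
  fun he => h (congrArg NQ.q he)

/-- order on NQ induced by R -/
def NQle (R : ℕ → ℕ → Prop) (p q : NQ) : Prop :=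
  (R p.a q.a ∧ p.a ≠ q.a) ∨ (p.a = q.a ∧ p.q ≤ q.q)

lemma core (R : ℕ → ℕ → Prop) :
    ∃ φ : ℚ ≃o ℚ, IsLinearOrder ℕ R →
      Nonempty ((fun a b : {q : ℚ // φ q = q} => (a : ℚ) ≤ (b : ℚ)) ≃r R) := by
  by_cases h : IsLinearOrder ℕ R
  swap
  · exact ⟨OrderIso.refl ℚ, fun hh => absurd hh h⟩
  haveI := h
  have hrefl : ∀ a, R a a := fun a => Std.Refl.refl (r := R) a
  have htrans : ∀ {a b c}, R a b → R b c → R a c :=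
    fun hab hbc => IsTrans.trans (r := R) _ _ _ hab hbc
  have hanti : ∀ {a b}, R a b → R b a → a = b :=
    fun hab hba => Std.Antisymm.antisymm (r := R) _ _ hab hba
  have htot : ∀ a b, R a b ∨ R b a := fun a b => Std.Total.total (r := R) a b
  letI : LinearOrder NQ :=
    { le := NQle R
      le_refl := fun p => Or.inr ⟨rfl, le_refl _⟩
      le_trans := by
        rintro p q r (⟨h1, h2⟩ | ⟨h1, h2⟩) (⟨h3, h4⟩ | ⟨h3, h4⟩)
        · refine Or.inl ⟨htrans h1 h3, fun he => h2 ?_⟩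
          exact hanti h1 (he ▸ h3)
        · exact Or.inl ⟨h3 ▸ h1, h3 ▸ h2⟩
        · exact Or.inl ⟨h1 ▸ h3, h1 ▸ h4⟩
        · exact Or.inr ⟨h1.trans h3, h2.trans h4⟩
      le_antisymm := by
        rintro ⟨pa, pq⟩ ⟨qa, qq⟩ (⟨h1, h2⟩ | ⟨h1, h2⟩) (⟨h3, h4⟩ | ⟨h3, h4⟩)
        · exact absurd (hanti h1 h3) h2
        · exact absurd h3.symm h2
        · exact absurd h1.symm h4
        · simp only [NQ.a_mk, NQ.q_mk] at h1 h2 h3 h4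
          subst h1; rw [le_antisymm h2 h4]
      le_total := by
        intro p q
        rcases eq_or_ne p.a q.a with he | hne
        · rcases le_total p.q q.q with h' | h'
          · exact Or.inl (Or.inr ⟨he, h'⟩)
          · exact Or.inr (Or.inr ⟨he.symm, h'⟩)
        · rcases htot p.a q.a with h' | h'
          · exact Or.inl (Or.inl ⟨h', hne⟩)
          · exact Or.inr (Or.inl ⟨h', hne.symm⟩)
      toDecidableLE := Classical.decRel _ }
  have hle : ∀ p q : NQ, p ≤ q ↔ NQle R p q := fun _ _ => Iff.rfl
  have hlt_succ : ∀ p : NQ, p < NQ.mk p.a (p.q + 1) :=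
    fun p => lt_of_le_of_ne (Or.inr ⟨rfl, by simp⟩) (NQ.ne_mk p _ (by intro hh; linarith))
  haveI : DenselyOrdered NQ := by
    constructor
    intro p q hpq
    have hle' : p ≤ q := le_of_lt hpq
    rcases hle' with ⟨h1, h2⟩ | ⟨h1, h2⟩
    · refine ⟨NQ.mk p.a (p.q + 1), hlt_succ p, ?_⟩
      refine lt_of_le_of_ne (Or.inl ⟨h1, h2⟩) (fun he => h2 ?_)
      rw [← he, NQ.a_mk]
    · have hq : p.q < q.q := by
        rcases lt_or_eq_of_le h2 with h' | h'
        · exact h'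
        · exact absurd (show p = q by cases p; cases q; simp_all) hpq.ne
      refine ⟨NQ.mk p.a ((p.q + q.q) / 2), ?_, ?_⟩
      · exact lt_of_le_of_ne (Or.inr ⟨rfl, by simp; linarith⟩)
          (NQ.ne_mk p _ (by intro he; rw [he] at hq; linarith))
      · refine lt_of_le_of_ne (Or.inr ⟨h1, by simp; linarith⟩) (fun he => ?_)
        have := congrArg NQ.q he
        simp only [NQ.q_mk] at this
        linarith
  haveI : NoMaxOrder NQ := ⟨fun p => ⟨NQ.mk p.a (p.q + 1), hlt_succ p⟩⟩
  haveI : NoMinOrder NQ :=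
    ⟨fun p => ⟨NQ.mk p.a (p.q - 1),
      lt_of_le_of_ne (Or.inr ⟨rfl, by simp⟩) (fun he => (NQ.ne_mk p _ (by intro hh; linarith)) he.symm)⟩⟩
  obtain ⟨e⟩ := Order.iso_of_countable_dense (α := NQ) (β := ℚ)
  let φX : NQ ≃o NQ :=
    ⟨⟨fun p => NQ.mk p.a (psi p.q), fun p => NQ.mk p.a (psi.symm p.q),
      fun p => by simp, fun p => by simp⟩, by
      intro p q
      show NQle R _ _ ↔ NQle R _ _
      unfold NQle
      simp only [Equiv.coe_fn_mk, NQ.a_mk, NQ.q_mk, psi.le_iff_le]⟩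
  refine ⟨(e.symm.trans φX).trans e, fun _ => ⟨?_⟩⟩
  have hfix : ∀ q : ℚ, ((e.symm.trans φX).trans e) q = q ↔ (e.symm q).q = 0 := by
    intro q
    have h1 : ((e.symm.trans φX).trans e) q = q ↔ φX (e.symm q) = e.symm q := by
      rw [show ((e.symm.trans φX).trans e) q = e (φX (e.symm q)) from rfl]
      constructor
      · intro hq
        have := congrArg e.symm hq
        simpa using this
      · intro hq
        rw [hq, e.apply_symm_apply]
    rw [h1]
    constructor
    · intro hq
      exact (psi_fixed _).mp (congrArg NQ.q hq)
    · intro hq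
      show NQ.mk (e.symm q).a (psi (e.symm q).q) = e.symm q
      rw [hq, (psi_fixed 0).mpr rfl]
      exact NQ.ext0 _ hq
  refine ⟨⟨fun x => (e.symm x.1).a, fun a => ⟨e (NQ.mk a 0), ?_⟩, ?_, ?_⟩, ?_⟩
  · rw [hfix, e.symm_apply_apply, NQ.q_mk]
  · rintro ⟨x, hx⟩
    rw [hfix] at hx
    apply Subtype.ext
    show e (NQ.mk (e.symm x).a 0) = x
    rw [NQ.ext0 _ hx, e.apply_symm_apply]
  · intro a
    simp only [e.symm_apply_apply, NQ.a_mk]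
  · rintro ⟨x, hx⟩ ⟨y, hy⟩
    rw [hfix] at hx hy
    simp only [Equiv.coe_fn_mk]
    rw [show (x : ℚ) ≤ y ↔ e.symm x ≤ e.symm y from e.symm.le_iff_le.symm, hle]
    unfold NQle
    constructor
    · intro hr
      rcases eq_or_ne (e.symm x).a (e.symm y).a with he | hne
      · exact Or.inr ⟨he, by rw [hx, hy]⟩
      · exact Or.inl ⟨hr, hne⟩
    · rintro (⟨h1, _⟩ | ⟨h1, _⟩)
      · exact h1
      · rw [h1]; exact hrefl _

/-- There is an assignment `R ↦ φ_R` of order automorphisms of `ℚ` to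
linear orders `R` on `ℕ` such that `(ℕ, R) ≅ (ℕ, S)` iff `φ_R` and `φ_S` are conjugate
in `Aut(ℚ)`, and moreover the fixed-point set of `φ_R` (with the induced order) is
order-isomorphic to `(ℕ, R)`. -/
theorem stmt_8 :
    ∃ f : (ℕ → ℕ → Prop) → (ℚ ≃o ℚ),
      (∀ R S : ℕ → ℕ → Prop, IsLinearOrder ℕ R → IsLinearOrder ℕ S →
        (Nonempty (R ≃r S) ↔ ∃ β : ℚ ≃o ℚ, ∀ q : ℚ, β ((f R) q) = (f S) (β q))) ∧
      (∀ R : ℕ → ℕ → Prop, IsLinearOrder ℕ R →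
        Nonempty ((fun a b : {q : ℚ // (f R) q = q} => (a : ℚ) ≤ (b : ℚ)) ≃r R)) := by
  choose Φ hΦ using core
  let s : Setoid (ℕ → ℕ → Prop) :=
    ⟨fun R S => Nonempty (R ≃r S),
      ⟨fun R => ⟨RelIso.refl R⟩, fun ⟨j⟩ => ⟨j.symm⟩, fun ⟨j⟩ ⟨k⟩ => ⟨j.trans k⟩⟩⟩
  have key : ∀ R : ℕ → ℕ → Prop, IsLinearOrder ℕ R →
      Nonempty ((fun a b : {q : ℚ // Φ (Quotient.out (Quotient.mk s R)) q = q} =>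
        (a : ℚ) ≤ (b : ℚ)) ≃r R) := by
    intro R hR
    obtain ⟨j⟩ : Nonempty ((Quotient.out (Quotient.mk s R)) ≃r R) := Quotient.mk_out (s := s) R
    obtain ⟨k⟩ := hΦ _ (relIso_isLinearOrder j hR)
    exact ⟨k.trans j⟩
  refine ⟨fun R => Φ (Quotient.out (Quotient.mk s R)), ?_, key⟩
  intro R S hR hS
  constructor
  · intro hRS
    have hq : Quotient.mk s R = Quotient.mk s S := Quotient.sound hRS
    refine ⟨OrderIso.refl ℚ, fun q => ?_⟩
    simp only [OrderIso.refl_apply]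
    rw [hq]
  · rintro ⟨β, hβ⟩
    obtain ⟨kR⟩ := key R hR
    obtain ⟨kS⟩ := key S hS
    set fR := Φ (Quotient.out (Quotient.mk s R)) with hfR
    set fS := Φ (Quotient.out (Quotient.mk s S)) with hfS
    have fix : (fun a b : {q : ℚ // fR q = q} => (a : ℚ) ≤ (b : ℚ)) ≃r
        (fun a b : {q : ℚ // fS q = q} => (a : ℚ) ≤ (b : ℚ)) := by
      refine ⟨⟨fun x => ⟨β x.1, ?_⟩, fun y => ⟨β.symm y.1, ?_⟩, ?_, ?_⟩, ?_⟩
      · rw [← hβ, x.2]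
      · apply β.injective
        rw [hβ, β.apply_symm_apply, y.2]
      · intro x
        exact Subtype.ext (β.symm_apply_apply x.1)
      · intro y
        exact Subtype.ext (β.apply_symm_apply y.1)
      · intro x y
        exact β.le_iff_le
    exact ⟨(kR.symm.trans fix).trans kS⟩
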